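/- Let T > 0, d ≥ 1, and let K be a set of continuous bounded-variation functions [0,T] → ℝ^d that is compact with respect to the norm ‖b‖ = |b(0)| + |b|_{1-var;[0,T]}. Then [0,T] × K is compact with respect to the metric ρ_{1-var}: every sequence (t_n, x_n) with t_n ∈ [0,T] and x_n ∈ K has a subsequence (t_{n_k}, x_{n_k}) and a limit (t, x) ∈ [0,T] × K with ρ_{1-var}((t_{n_k},x_{n_k}),(t,x)) → 0. -/

import Mathlib

open Filter

/-- The metric `ρ_{1-var}((t,b),(s,e)) = |t - s| + |a_t b - a_s e|_{1-var;[0,T]}`,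
where `a_t` is the stopping operator `(a_t x)(r) = x(min(r,t))`. -/
noncomputable def rho1var {d : ℕ} (T : ℝ) (t : ℝ) (b : ℝ → EuclideanSpace ℝ (Fin d))
    (s : ℝ) (e : ℝ → EuclideanSpace ℝ (Fin d)) : ℝ :=
  |t - s| + (eVariationOn (fun r => b (min r t) - e (min r s)) (Set.Icc 0 T)).toReal

open Set ENNReal

section Aux

variable {α : Type*} [LinearOrder α] {E : Type*} [SeminormedAddCommGroup E]

lemma eVar_congr_edist {f g : α → E} {s : Set α}
    (h : ∀ u v, edist (f u) (f v) = edist (g u) (g v)) :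
    eVariationOn f s = eVariationOn g s := by
  simp only [eVariationOn]
  congr 1 with p
  congr 1 with i
  exact h _ _

lemma eVar_neg (f : α → E) (s : Set α) :
    eVariationOn (fun r => -f r) s = eVariationOn f s :=
  eVar_congr_edist fun u v => edist_neg_neg _ _

lemma eVar_sub_swap (f g : α → E) (s : Set α) :
    eVariationOn (fun r => f r - g r) s = eVariationOn (fun r => g r - f r) s :=
  eVar_congr_edist fun u v => by
    rw [← edist_neg_neg (f u - g u), neg_sub, neg_sub]

lemma eVar_const_sub (c : E) (f : α → E) (s : Set α) :
    eVariationOn (fun r => c - f r) s = eVariationOn f s :=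
  eVar_congr_edist fun u v => by
    rw [← edist_neg_neg (c - f u), neg_sub, neg_sub, edist_sub_right]

lemma eVar_add_le (f g : α → E) (s : Set α) :
    eVariationOn (fun r => f r + g r) s ≤ eVariationOn f s + eVariationOn g s := by
  apply iSup_le
  rintro ⟨n, u, hu, us⟩
  calc ∑ i ∈ Finset.range n, edist (f (u (i+1)) + g (u (i+1))) (f (u i) + g (u i))
      ≤ ∑ i ∈ Finset.range n,
        (edist (f (u (i+1))) (f (u i)) + edist (g (u (i+1))) (g (u i))) :=
        Finset.sum_le_sum fun i _ => edist_add_add_le _ _ _ _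
    _ = _ := Finset.sum_add_distrib
    _ ≤ _ := add_le_add (eVariationOn.sum_le (f := f) (n := n) hu us) (eVariationOn.sum_le (f := g) (n := n) hu us)

lemma eVar_sub_le (f g : α → E) (s : Set α) :
    eVariationOn (fun r => f r - g r) s ≤ eVariationOn f s + eVariationOn g s := by
  calc eVariationOn (fun r => f r - g r) s
      = eVariationOn (fun r => f r + -g r) s := by simp only [sub_eq_add_neg]
    _ ≤ eVariationOn f s + eVariationOn (fun r => -g r) s := eVar_add_le _ _ _
    _ = _ := by rw [eVar_neg]

lemma eVar_triangle (F G H : α → E) (s : Set α) :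
    eVariationOn (fun r => F r - H r) s ≤
      eVariationOn (fun r => F r - G r) s + eVariationOn (fun r => G r - H r) s := by
  have : (fun r => F r - H r) = fun r => (F r - G r) + (G r - H r) := by
    funext r; abel
  rw [this]
  exact eVar_add_le _ _ _

lemma eVar_stop_le (f : ℝ → E) {T a : ℝ} (ha : a ∈ Set.Icc 0 T) :
    eVariationOn (fun r => f (min r a)) (Set.Icc 0 T) ≤ eVariationOn f (Set.Icc 0 T) := by
  have hm : MonotoneOn (fun r => min r a) (Set.Icc (0:ℝ) T) :=
    fun u _ v _ uv => min_le_min uv le_rfl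
  rw [show (fun r => f (min r a)) = f ∘ (fun r => min r a) from rfl,
    eVariationOn.comp_eq_of_monotoneOn f _ hm]
  apply eVariationOn.mono
  rintro _ ⟨r, hr, rfl⟩
  exact ⟨le_min hr.1 ha.1, min_le_of_left_le hr.2⟩

lemma eVar_minmin (f : ℝ → E) {T a b : ℝ} (hab : a ≤ b) :
    eVariationOn (fun r => f (min r a) - f (min r b)) (Set.Icc 0 T) ≤
      eVariationOn f (Set.Icc a b) := by
  have hg : MonotoneOn (fun r => min (max r a) b) (Set.Icc (0:ℝ) T) :=
    fun u _ v _ uv => min_le_min (max_le_max uv le_rfl) le_rfl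
  have heq : (fun r => f (min r a) - f (min r b)) =
      (fun z => f a - f z) ∘ (fun r => min (max r a) b) := by
    funext r
    simp only [Function.comp]
    rcases le_total r a with h | h
    · rw [min_eq_left h, min_eq_left (h.trans hab), max_eq_right h, min_eq_left hab,
        sub_self, sub_self]
    · rw [min_eq_right h, max_eq_left h]
  rw [heq, eVariationOn.comp_eq_of_monotoneOn _ _ hg]
  refine le_trans (eVariationOn.mono _ ?_) (le_of_eq (eVar_const_sub _ _ _))
  rintro _ ⟨r, _, rfl⟩
  exact ⟨le_min (le_max_right r a) hab, min_le_right _ _⟩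

lemma eVar_minmin' (f : ℝ → E) (T a b : ℝ) :
    eVariationOn (fun r => f (min r a) - f (min r b)) (Set.Icc 0 T) ≤
      eVariationOn f (Set.Icc (min a b) (max a b)) := by
  rcases le_total a b with h | h
  · rw [min_eq_left h, max_eq_right h]; exact eVar_minmin f h
  · rw [min_eq_right h, max_eq_left h, eVar_sub_swap]; exact eVar_minmin f h

variable {E : Type*} [SeminormedAddCommGroup E]

lemma eVar_right_cont (f : ℝ → E) {T tl : ℝ}
    (hfc : ContinuousWithinAt f (Set.Icc tl T) tl)
    (hbv : BoundedVariationOn f (Set.Icc tl T))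
    {ε : ℝ≥0∞} (hε : 0 < ε) (hεt : ε ≠ ⊤) :
    ∃ δ > 0, ∀ b, tl ≤ b → b ≤ T → b - tl < δ →
      eVariationOn f (Set.Icc tl b) < ε := by
  set V := eVariationOn f (Set.Icc tl T) with hVdef
  have hε2 : (0:ℝ≥0∞) < ε / 2 := ENNReal.half_pos hε.ne'
  have hε2t : ε / 2 ≠ ⊤ := (ENNReal.div_lt_top hεt (by norm_num)).ne
  have hev : ∀ᶠ z in nhdsWithin tl (Set.Icc tl T), edist (f z) (f tl) < ε / 2 :=
    (EMetric.tendsto_nhds.mp hfc) _ hε2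
  obtain ⟨δc, hδc, hball⟩ := Metric.mem_nhdsWithin_iff.mp hev
  rcases lt_or_ge V ε with hVe | hVe
  · exact ⟨1, one_pos, fun b hb hbT _ =>
      lt_of_le_of_lt (eVariationOn.mono f (Set.Icc_subset_Icc le_rfl hbT)) hVe⟩
  have hV0 : V ≠ 0 := fun h => by
    rw [h] at hVe
    exact absurd (le_antisymm hVe zero_le) hε.ne'
  have hsub : V - ε / 2 < V := ENNReal.sub_lt_self hbv hV0 hε2.ne'
  have h1 : V - ε/2 < ⨆ p : ℕ × { u : ℕ → ℝ // Monotone u ∧ ∀ i, u i ∈ Set.Icc tl T },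
      ∑ i ∈ Finset.range p.1, edist (f (p.2.1 (i+1))) (f (p.2.1 i)) := hsub
  obtain ⟨⟨n, u, hu, us⟩, hS⟩ := lt_iSup_iff.mp h1
  set S := ∑ i ∈ Finset.range n, edist (f (u (i+1))) (f (u i)) with hSdef
  have hSV : S ≤ V := eVariationOn.sum_le (f := f) (n := n) hu us
  have hStop : S ≠ ⊤ := ne_top_of_le_ne_top hbv hSV
  have hVS : V < S + ε/2 :=
    (ENNReal.sub_lt_iff_lt_right hε2t ((ENNReal.half_le_self).trans hVe)).mp hS
  by_cases hexists : ∃ j, tl < u j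
  case neg =>
    exfalso
    push_neg at hexists
    have hS0 : S = 0 := Finset.sum_eq_zero fun i _ => by
      rw [le_antisymm (hexists (i+1)) (us (i+1)).1, le_antisymm (hexists i) (us i).1,
        edist_self]
    rw [hS0, zero_add] at hVS
    exact absurd (lt_of_le_of_lt hVe (hVS.trans_le ENNReal.half_le_self)) (lt_irrefl _)
  case pos =>
  set m := Nat.find hexists with hmdef
  have hm : tl < u m := Nat.find_spec hexists
  have hlt : ∀ j < m, u j = tl := fun j hj =>
    le_antisymm (not_lt.mp (Nat.find_min hexists hj)) (us j).1
  refine ⟨min δc (u m - tl), lt_min hδc (sub_pos.mpr hm), fun b hb hbT hbδ => ?_⟩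
  have hbm : b ≤ u m := by
    have := lt_of_lt_of_le hbδ (min_le_right _ _); linarith
  have hbδc : edist (f b) (f tl) < ε / 2 := by
    apply hball
    constructor
    · rw [Metric.mem_ball, Real.dist_eq, abs_of_nonneg (sub_nonneg.mpr hb)]
      exact lt_of_lt_of_le hbδ (min_le_left _ _)
    · exact ⟨hb, hbT⟩
  have hw : Monotone (fun i => max b (u i)) := fun i j hij => max_le_max le_rfl (hu hij)
  have hws : ∀ i, max b (u i) ∈ Set.Icc b T := fun i => ⟨le_max_left _ _, max_le hbT (us i).2⟩
  have hSmax : ∑ i ∈ Finset.range n, edist (f (max b (u (i+1)))) (f (max b (u i)))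
      ≤ eVariationOn f (Set.Icc b T) := eVariationOn.sum_le (f := f) (n := n) hw hws
  have hminval : ∀ i, min b (u i) = if i < m then tl else b := by
    intro i
    by_cases h : i < m
    · rw [if_pos h, hlt i h, min_eq_right hb]
    · rw [if_neg h]
      exact min_eq_left (hbm.trans (hu (not_lt.mp h)))
  have hSmin : ∑ i ∈ Finset.range n, edist (f (min b (u (i+1)))) (f (min b (u i)))
      ≤ edist (f b) (f tl) := by
    calc ∑ i ∈ Finset.range n, edist (f (min b (u (i+1)))) (f (min b (u i)))
        ≤ ∑ i ∈ Finset.range n, (if i = m - 1 then edist (f b) (f tl) else 0) := by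
          apply Finset.sum_le_sum
          intro i _
          rw [hminval, hminval]
          by_cases h1 : i < m
          · by_cases h2 : i + 1 < m
            · rw [if_pos h2, if_pos h1, edist_self]
              exact zero_le
            · have h3 : i = m - 1 := by omega
              rw [if_neg h2, if_pos h1, if_pos h3]
          · have h2 : ¬ (i + 1 < m) := by omega
            rw [if_neg h2, if_neg h1, edist_self]
            exact zero_le
      _ ≤ edist (f b) (f tl) := by
          rw [Finset.sum_ite_eq' (Finset.range n)]
          split <;> simp
  have htri : ∀ i ∈ Finset.range n, edist (f (u (i+1))) (f (u i)) ≤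
      edist (f (min b (u (i+1)))) (f (min b (u i))) +
      edist (f (max b (u (i+1)))) (f (max b (u i))) := by
    intro i _
    have hmono : u i ≤ u (i+1) := hu (Nat.le_succ i)
    rcases le_total b (u i) with h1 | h1
    · rw [min_eq_left (h1.trans hmono), min_eq_left h1, max_eq_right (h1.trans hmono),
        max_eq_right h1, edist_self, zero_add]
    · rcases le_total b (u (i+1)) with h2 | h2
      · rw [min_eq_left h2, min_eq_right h1, max_eq_right h2, max_eq_left h1]
        exact (edist_triangle _ (f b) _).trans (le_of_eq (add_comm _ _))
      · rw [min_eq_right h2, min_eq_right h1, max_eq_left h2, max_eq_left h1,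
          edist_self, add_zero]
  have hS2 : S ≤ edist (f b) (f tl) + eVariationOn f (Set.Icc b T) := by
    calc S ≤ ∑ i ∈ Finset.range n, (edist (f (min b (u (i+1)))) (f (min b (u i))) +
          edist (f (max b (u (i+1)))) (f (max b (u i)))) := Finset.sum_le_sum htri
      _ = _ + _ := Finset.sum_add_distrib
      _ ≤ _ := add_le_add hSmin hSmax
  have hadd : eVariationOn f (Set.Icc tl b) + eVariationOn f (Set.Icc b T) = V := by
    have h := eVariationOn.Icc_add_Icc f hb hbT (show b ∈ Set.Icc tl T from ⟨hb, hbT⟩)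
    rw [Set.Icc_inter_Icc, Set.Icc_inter_Icc, Set.Icc_inter_Icc] at h
    simp only [sup_idem, inf_idem, sup_of_le_right hb, inf_of_le_right hbT, inf_idem] at h
    exact h
  have hfinal : eVariationOn f (Set.Icc tl b) + S < ε + S := by
    calc eVariationOn f (Set.Icc tl b) + S
        ≤ eVariationOn f (Set.Icc tl b) + (edist (f b) (f tl) + eVariationOn f (Set.Icc b T)) :=
          add_le_add le_rfl hS2
      _ = (eVariationOn f (Set.Icc tl b) + eVariationOn f (Set.Icc b T)) + edist (f b) (f tl) := by
          ring
      _ = V + edist (f b) (f tl) := by rw [hadd]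
      _ < (S + ε/2) + ε/2 := ENNReal.add_lt_add hVS hbδc
      _ = ε + S := by rw [add_assoc, ENNReal.add_halves, add_comm]
  exact (ENNReal.add_lt_add_iff_right hStop).mp hfinal

variable {E : Type*} [SeminormedAddCommGroup E]


lemma eVar_neg_comp (f : ℝ → E) (a b : ℝ) :
    eVariationOn (fun s => f (-s)) (Set.Icc (-b) (-a)) = eVariationOn f (Set.Icc a b) := by
  have hanti : AntitoneOn (fun s : ℝ => -s) (Set.Icc (-b) (-a)) :=
    fun u _ v _ uv => neg_le_neg uv
  rw [show (fun s : ℝ => f (-s)) = f ∘ (fun s : ℝ => -s) from rfl,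
    eVariationOn.comp_eq_of_antitoneOn f _ hanti]
  congr 1
  ext z
  constructor
  · rintro ⟨w, ⟨h1, h2⟩, rfl⟩
    simp only [Set.mem_Icc]
    constructor <;> linarith
  · rintro ⟨h1, h2⟩
    exact ⟨-z, ⟨by linarith, by linarith⟩, neg_neg z⟩

lemma eVar_left_cont (f : ℝ → E) {A tl : ℝ}
    (hfc : ContinuousWithinAt f (Set.Icc A tl) tl)
    (hbv : BoundedVariationOn f (Set.Icc A tl))
    {ε : ℝ≥0∞} (hε : 0 < ε) (hεt : ε ≠ ⊤) :
    ∃ δ > 0, ∀ a, A ≤ a → a ≤ tl → tl - a < δ →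
      eVariationOn f (Set.Icc a tl) < ε := by
  have h1 : ContinuousWithinAt (fun s : ℝ => f (-s)) (Set.Icc (-tl) (-A)) (-tl) := by
    have : ContinuousWithinAt f (Set.Icc A tl) (-(-tl)) := by rwa [neg_neg]
    refine ContinuousWithinAt.comp this continuous_neg.continuousWithinAt ?_
    rintro z ⟨hz1, hz2⟩
    exact ⟨by linarith, by linarith⟩
  have h2 : BoundedVariationOn (fun s : ℝ => f (-s)) (Set.Icc (-tl) (-A)) := by
    rw [BoundedVariationOn, eVar_neg_comp]
    exact hbv
  obtain ⟨δ, hδ, hδp⟩ := eVar_right_cont _ h1 h2 hε hεt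
  refine ⟨δ, hδ, fun a hAa hatl hd => ?_⟩
  have := hδp (-a) (neg_le_neg hatl) (neg_le_neg hAa) (by linarith)
  rwa [eVar_neg_comp] at this

lemma eVar_near (f : ℝ → E) {T tl : ℝ} (htl : tl ∈ Set.Icc 0 T)
    (hfc : ContinuousOn f (Set.Icc 0 T)) (hbv : BoundedVariationOn f (Set.Icc 0 T))
    {ε : ℝ} (hε : 0 < ε) :
    ∃ δ > 0, ∀ a b : ℝ, 0 ≤ a → b ≤ T → a ≤ tl → tl ≤ b → tl - a < δ → b - tl < δ →
      (eVariationOn f (Set.Icc a b)).toReal < ε := by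
  set ε2 : ℝ≥0∞ := ENNReal.ofReal ε / 2 with hε2def
  have hε2 : 0 < ε2 := ENNReal.half_pos (ENNReal.ofReal_pos.mpr hε).ne'
  have hε2t : ε2 ≠ ⊤ := (ENNReal.div_lt_top ENNReal.ofReal_ne_top (by norm_num)).ne
  have hsubR : Set.Icc tl T ⊆ Set.Icc 0 T := Set.Icc_subset_Icc htl.1 le_rfl
  have hsubL : Set.Icc 0 tl ⊆ Set.Icc 0 T := Set.Icc_subset_Icc le_rfl htl.2
  obtain ⟨δR, hδR, hR⟩ :=
    eVar_right_cont f ((hfc tl htl).mono hsubR) (hbv.mono hsubR) hε2 hε2t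
  obtain ⟨δL, hδL, hL⟩ :=
    eVar_left_cont f ((hfc tl htl).mono hsubL) (hbv.mono hsubL) hε2 hε2t
  refine ⟨min δR δL, lt_min hδR hδL, fun a b ha hb hatl htlb hda hdb => ?_⟩
  have hab : a ≤ b := hatl.trans htlb
  have hadd : eVariationOn f (Set.Icc a tl) + eVariationOn f (Set.Icc tl b) =
      eVariationOn f (Set.Icc a b) := by
    have h := eVariationOn.Icc_add_Icc f hatl htlb
      (show tl ∈ Set.Icc a b from ⟨hatl, htlb⟩)
    rw [Set.Icc_inter_Icc, Set.Icc_inter_Icc, Set.Icc_inter_Icc] at h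
    simpa only [sup_idem, inf_idem, sup_of_le_right hatl, inf_of_le_right htlb] using h
  have hlt : eVariationOn f (Set.Icc a b) < ENNReal.ofReal ε := by
    rw [← hadd]
    calc eVariationOn f (Set.Icc a tl) + eVariationOn f (Set.Icc tl b)
        < ε2 + ε2 := ENNReal.add_lt_add
          (hL a ha hatl (lt_of_lt_of_le hda (min_le_right _ _)))
          (hR b htlb hb (lt_of_lt_of_le hdb (min_le_left _ _)))
      _ = ENNReal.ofReal ε := ENNReal.add_halves _
  have hne : eVariationOn f (Set.Icc a b) ≠ ⊤ := ne_top_of_lt hlt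
  have h2 := (ENNReal.toReal_lt_toReal hne ENNReal.ofReal_ne_top).mpr hlt
  rwa [ENNReal.toReal_ofReal hε.le] at h2

end Aux

/-- if `K ⊆ C^{1-var}([0,T],ℝ^d)` is (sequentially) compact for the
norm `‖b‖ = |b(0)| + |b|_{1-var;[0,T]}`, then `[0,T] × K` is (sequentially)
compact for the metric `ρ_{1-var}`. -/
theorem stmt_9 (T : ℝ) (hT : 0 < T) (d : ℕ) (hd : 1 ≤ d)
    (K : Set (ℝ → EuclideanSpace ℝ (Fin d)))
    (hK : ∀ x ∈ K, ContinuousOn x (Set.Icc 0 T) ∧ BoundedVariationOn x (Set.Icc 0 T))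
    (hKcpt : ∀ x : ℕ → ℝ → EuclideanSpace ℝ (Fin d), (∀ n, x n ∈ K) →
      ∃ φ : ℕ → ℕ, StrictMono φ ∧ ∃ y ∈ K,
        Tendsto (fun k => ‖x (φ k) 0 - y 0‖ +
          (eVariationOn (fun r => x (φ k) r - y r) (Set.Icc 0 T)).toReal)
          atTop (nhds 0))
    (t : ℕ → ℝ) (ht : ∀ n, t n ∈ Set.Icc 0 T)
    (x : ℕ → ℝ → EuclideanSpace ℝ (Fin d)) (hx : ∀ n, x n ∈ K) :
    ∃ φ : ℕ → ℕ, StrictMono φ ∧ ∃ tl ∈ Set.Icc 0 T, ∃ y ∈ K,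
      Tendsto (fun k => rho1var T (t (φ k)) (x (φ k)) tl y) atTop (nhds 0) := by
  obtain ⟨φ₁, hφ₁, y, hyK, hconv⟩ := hKcpt x hx
  obtain ⟨tl, htlmem, ψ, hψ, htconv⟩ :=
    IsCompact.tendsto_subseq (isCompact_Icc (a := (0:ℝ)) (b := T)) (fun n => ht (φ₁ n))
  refine ⟨φ₁ ∘ ψ, hφ₁.comp hψ, tl, htlmem, y, hyK, ?_⟩
  have hyC := hK y hyK
  -- notation
  set t' : ℕ → ℝ := fun k => t (φ₁ (ψ k)) with ht'def
  set x' : ℕ → ℝ → EuclideanSpace ℝ (Fin d) := fun k => x (φ₁ (ψ k)) with hx'def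
  have ht'mem : ∀ k, t' k ∈ Set.Icc 0 T := fun k => ht _
  have hx'K : ∀ k, x' k ∈ K := fun k => hx _
  -- convergence of the variation of x' - y
  have hnorm : Tendsto (fun k => ‖x' k 0 - y 0‖ +
      (eVariationOn (fun r => x' k r - y r) (Set.Icc 0 T)).toReal) atTop (nhds 0) :=
    hconv.comp hψ.tendsto_atTop
  have hvar0 : Tendsto (fun k =>
      (eVariationOn (fun r => x' k r - y r) (Set.Icc 0 T)).toReal) atTop (nhds 0) :=
    squeeze_zero (fun k => ENNReal.toReal_nonneg)
      (fun k => le_add_of_nonneg_left (norm_nonneg _)) hnorm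
  -- convergence of |t' - tl|
  have habs : Tendsto (fun k => |t' k - tl|) atTop (nhds 0) := by
    have h := tendsto_iff_dist_tendsto_zero.mp htconv
    simp only [Real.dist_eq] at h
    exact h
  -- convergence of variation of y near tl
  have hg2 : Tendsto (fun k =>
      (eVariationOn y (Set.Icc (min (t' k) tl) (max (t' k) tl))).toReal) atTop (nhds 0) := by
    rw [Metric.tendsto_atTop]
    intro ε hε
    obtain ⟨δ, hδ, hnear⟩ := eVar_near y htlmem hyC.1 hyC.2 hε
    obtain ⟨N, hN⟩ := Metric.tendsto_atTop.mp htconv δ hδ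
    refine ⟨N, fun k hk => ?_⟩
    have hd : |t' k - tl| < δ := by
      have := hN k hk
      rwa [Real.dist_eq] at this
    have htk := ht'mem k
    have h1 : tl - min (t' k) tl ≤ |t' k - tl| := by
      rcases le_total (t' k) tl with h | h
      · rw [min_eq_left h, abs_sub_comm, abs_of_nonneg (sub_nonneg.mpr h)]
      · rw [min_eq_right h, sub_self]
        exact abs_nonneg _
    have h2 : max (t' k) tl - tl ≤ |t' k - tl| := by
      rcases le_total (t' k) tl with h | h
      · rw [max_eq_right h, sub_self]
        exact abs_nonneg _
      · rw [max_eq_left h, abs_of_nonneg (sub_nonneg.mpr h)]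
    rw [Real.dist_eq, sub_zero, abs_of_nonneg ENNReal.toReal_nonneg]
    exact hnear _ _ (le_min htk.1 htlmem.1) (max_le htk.2 htlmem.2)
      (min_le_right _ _) (le_max_right _ _) (by linarith) (by linarith)
  -- pointwise bound
  have hbound : ∀ k, rho1var T (t' k) (x' k) tl y ≤ |t' k - tl| +
      ((eVariationOn (fun r => x' k r - y r) (Set.Icc 0 T)).toReal +
        (eVariationOn y (Set.Icc (min (t' k) tl) (max (t' k) tl))).toReal) := by
    intro k
    have hxk := hK _ (hx'K k)
    have htk := ht'mem k
    refine add_le_add le_rfl ?_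
    have hA : eVariationOn (fun r => x' k (min r (t' k)) - y (min r (t' k))) (Set.Icc 0 T)
        ≤ eVariationOn (fun r => x' k r - y r) (Set.Icc 0 T) :=
      eVar_stop_le (fun r => x' k r - y r) htk
    have hB : eVariationOn (fun r => y (min r (t' k)) - y (min r tl)) (Set.Icc 0 T)
        ≤ eVariationOn y (Set.Icc (min (t' k) tl) (max (t' k) tl)) := eVar_minmin' y T _ _
    have hAfin : eVariationOn (fun r => x' k r - y r) (Set.Icc 0 T) ≠ ⊤ :=
      ne_top_of_le_ne_top (ENNReal.add_ne_top.mpr ⟨hxk.2, hyC.2⟩)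
        (eVar_sub_le (x' k) y (Set.Icc 0 T))
    have hBfin : eVariationOn y (Set.Icc (min (t' k) tl) (max (t' k) tl)) ≠ ⊤ :=
      ne_top_of_le_ne_top hyC.2 (eVariationOn.mono y
        (Set.Icc_subset_Icc (le_min htk.1 htlmem.1) (max_le htk.2 htlmem.2)))
    have htri := eVar_triangle (fun r => x' k (min r (t' k))) (fun r => y (min r (t' k)))
      (fun r => y (min r tl)) (Set.Icc 0 T)
    calc (eVariationOn (fun r => x' k (min r (t' k)) - y (min r tl)) (Set.Icc 0 T)).toReal
        ≤ ((eVariationOn (fun r => x' k r - y r) (Set.Icc 0 T)) +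
            eVariationOn y (Set.Icc (min (t' k) tl) (max (t' k) tl))).toReal :=
          ENNReal.toReal_mono (ENNReal.add_ne_top.mpr ⟨hAfin, hBfin⟩)
            (htri.trans (add_le_add hA hB))
      _ = _ := ENNReal.toReal_add hAfin hBfin
  have hupper : Tendsto (fun k => |t' k - tl| +
      ((eVariationOn (fun r => x' k r - y r) (Set.Icc 0 T)).toReal +
        (eVariationOn y (Set.Icc (min (t' k) tl) (max (t' k) tl))).toReal))
      atTop (nhds 0) := by
    have h := habs.add (hvar0.add hg2)
    simpa using h
  exact squeeze_zero (fun k => add_nonneg (abs_nonneg _) ENNReal.toReal_nonneg) hbound hupper
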